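/- Let d ≥ 1, l ∈ ℤ, and let (χ_i)_{i∈I} be a family of measurable functions mapping 𝒯₁ × ℝ^d × ℝ^d × ℝ^d into ℝ such that: (a) for all i ∈ I, (s,t) ∈ 𝒯₁ and ζ ∈ ℝ^d, the map (x,y) ↦ χ_i(s,t,x,y,ζ) is infinitely differentiable; (b) for all multi-indices α, β ∈ ℕ^d there exist constants c₁ ≥ 0 and c₂ > 0 such that for all i ∈ I, (s,t) ∈ 𝒯₁ and x, y, ζ ∈ ℝ^d, |∂_x^α ∂_y^β χ_i(s,t,x,y,ζ)| ≤ c₁ t^{−(|α|+|β|+d+l)/2} exp(−c₂‖x−y‖²/t − c₂‖ζ‖²). Define 𝓘(χ_i)(s,t,x,y) = ∫_{ℝ^d} χ_i(s,t,x,y,ζ) dζ. Then {𝓘(χ_i) : i ∈ I} is a bounded subset of 𝓗_l(ℝ^d): each 𝓘(χ_i)(s,t,·,·) is infinitely differentiable and for every α, β ∈ ℕ^d there exist C₁ ≥ 0 and C₂ > 0, independent of i ∈ I, with |∂_x^α ∂_y^β 𝓘(χ_i)(s,t,x,y)| ≤ C₁ t^{−(|α|+|β|+d+l)/2} exp(−C₂‖x−y‖²/t)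 for all (s,t) ∈ 𝒯₁ and x, y ∈ ℝ^d. -/

import Mathlib

open MeasureTheory Real

noncomputable section

/-- `ℝ^d` with the Euclidean norm. -/
abbrev Eu (d : ℕ) := EuclideanSpace ℝ (Fin d)

/-- Iterated partial derivative along a list of coordinate directions. -/
noncomputable def pderivs {d : ℕ} : List (Fin d) → (Eu d → ℝ) → Eu d → ℝ
  | [], f => f
  | i :: l, f => pderivs l fun x => fderiv ℝ f x (EuclideanSpace.single i 1)

/-- The list of coordinates (with multiplicities) associated to a multi-index `m : ℕ^d`. -/
def mToList {d : ℕ} (m : Fin d → ℕ) : List (Fin d) :=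
  (List.finRange d).flatMap fun i => List.replicate (m i) i

/-- The partial derivative `∂^m` associated to a multi-index `m : ℕ^d`. -/
noncomputable def pderivM {d : ℕ} (m : Fin d → ℕ) (f : Eu d → ℝ) : Eu d → ℝ :=
  pderivs (mToList m) f

/-- The length `|m| = m₁ + ⋯ + m_d` of a multi-index. -/
def mlen {d : ℕ} (m : Fin d → ℕ) : ℕ := ∑ i, m i

/-- Mixed partial derivative `∂_x^α ∂_y^β f(x,y)` of a function of two `ℝ^d` variables. -/
noncomputable def D2 {d : ℕ} (α β : Fin d → ℕ) (f : Eu d → Eu d → ℝ) (x y : Eu d) : ℝ :=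
  pderivM α (fun x' => pderivM β (f x') y) x

/-! ### Auxiliary machinery -/

open ContDiff

attribute [-instance] Sum.instBEq

section DlBasics

variable {E : Type*} [NormedAddCommGroup E] [NormedSpace ℝ E]

/-- Iterated directional derivative along a list of directions. -/
noncomputable def Dl : List E → (E → ℝ) → E → ℝ
  | [], f => f
  | v :: L, f => Dl L fun p => fderiv ℝ f p v

lemma dl_append (P Q : List E) (f : E → ℝ) : Dl (P ++ Q) f = Dl Q (Dl P f) := by
  induction P generalizing f with
  | nil => rfl
  | cons v P ih => simp only [List.cons_append, Dl]; exact ih _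

lemma contDiff_fderiv_apply {f : E → ℝ} (h : ContDiff ℝ ∞ f) (v : E) :
    ContDiff ℝ ∞ fun p => fderiv ℝ f p v :=
  (h.fderiv_right (by simp)).clm_apply contDiff_const

lemma dl_contDiff (L : List E) {f : E → ℝ} (h : ContDiff ℝ ∞ f) : ContDiff ℝ ∞ (Dl L f) := by
  induction L generalizing f with
  | nil => exact h
  | cons v L ih => exact ih (contDiff_fderiv_apply h v)

lemma dl_swap (v w : E) (L : List E) {f : E → ℝ} (h : ContDiff ℝ ∞ f) :
    Dl (v :: w :: L) f = Dl (w :: v :: L) f := by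
  have hdf : Differentiable ℝ (fderiv ℝ f) :=
    (h.fderiv_right (m := ∞) (by simp)).differentiable (by simp)
  have e2 : ∀ (p : E) (u z : E), fderiv ℝ (fun q => fderiv ℝ f q u) p z
      = fderiv ℝ (fderiv ℝ f) p z u := by
    intro p u z
    rw [show (fun q => fderiv ℝ f q u) = fun q => (fderiv ℝ f q) u from rfl,
      fderiv_clm_apply (hdf p) (differentiableAt_const u)]
    simp
  have key : (fun p => fderiv ℝ (fun q => fderiv ℝ f q v) p w)
      = (fun p => fderiv ℝ (fun q => fderiv ℝ f q w) p v) := by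
    funext p
    rw [e2 p v w, e2 p w v]
    exact second_derivative_symmetric (fun y => (h.differentiable (by simp) y).hasFDerivAt)
      ((hdf p).hasFDerivAt) w v
  simp only [Dl, key]

lemma dl_perm {L L' : List E} (hp : L.Perm L') :
    ∀ f : E → ℝ, ContDiff ℝ ∞ f → Dl L f = Dl L' f := by
  induction hp with
  | nil => intro f _; rfl
  | cons v _ ih => intro f hf; simp only [Dl]; exact ih _ (contDiff_fderiv_apply hf v)
  | swap v w L => intro f hf; exact dl_swap w v L hf
  | trans h1 h2 ih1 ih2 =>
      intro f hf
      rw [ih1 f hf, ih2 f hf]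

end DlBasics

section Coord

variable {d : ℕ}

/-- Coordinate directions of `ℝ^d × ℝ^d`. -/
def bdir (d : ℕ) : Fin d ⊕ Fin d → Eu d × Eu d
  | .inl i => (EuclideanSpace.single i 1, 0)
  | .inr j => (0, EuclideanSpace.single j 1)

/-- Coordinate functionals of `ℝ^d × ℝ^d`. -/
noncomputable def coordCLM (d : ℕ) : Fin d ⊕ Fin d → (Eu d × Eu d →L[ℝ] ℝ)
  | .inl i => (EuclideanSpace.proj i).comp (ContinuousLinearMap.fst ℝ (Eu d) (Eu d))
  | .inr j => (EuclideanSpace.proj j).comp (ContinuousLinearMap.snd ℝ (Eu d) (Eu d))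

lemma eu_sum_single (v : Eu d) : ∑ i, v i • EuclideanSpace.single i (1:ℝ) = v := by
  have := (EuclideanSpace.basisFun (Fin d) ℝ).sum_repr v
  simpa [EuclideanSpace.basisFun_apply, EuclideanSpace.basisFun_repr] using this

lemma basis_expand (v : Eu d × Eu d) :
    ∑ k : Fin d ⊕ Fin d, coordCLM d k v • bdir d k = v := by
  have hfst : (∑ k : Fin d ⊕ Fin d, coordCLM d k v • bdir d k).1 = v.1 := by
    rw [Prod.fst_sum]
    rw [Fintype.sum_sum_type]
    simp only [coordCLM, bdir, Prod.smul_mk, smul_zero, Prod.fst, Finset.sum_const_zero]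
    simpa using eu_sum_single v.1
  have hsnd : (∑ k : Fin d ⊕ Fin d, coordCLM d k v • bdir d k).2 = v.2 := by
    rw [Prod.snd_sum]
    rw [Fintype.sum_sum_type]
    simp only [coordCLM, bdir, Prod.smul_mk, smul_zero, Prod.snd, Finset.sum_const_zero]
    simpa using eu_sum_single v.2
  exact Prod.ext hfst hsnd

lemma clm_expand (f : (Eu d × Eu d) →L[ℝ] ℝ) :
    f = ∑ k : Fin d ⊕ Fin d, f (bdir d k) • coordCLM d k := by
  refine ContinuousLinearMap.ext fun v => ?_
  rw [ContinuousLinearMap.sum_apply]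
  simp only [ContinuousLinearMap.smul_apply, smul_eq_mul]
  calc f v = f (∑ k : Fin d ⊕ Fin d, coordCLM d k v • bdir d k) := by rw [basis_expand]
    _ = ∑ k : Fin d ⊕ Fin d, coordCLM d k v • f (bdir d k) := by
        rw [map_sum]; simp
    _ = _ := by simp [mul_comm]

lemma norm_coordCLM_le (k : Fin d ⊕ Fin d) : ‖coordCLM d k‖ ≤ 1 := by
  have habs : ∀ (u : Eu d) (i : Fin d), |u i| ≤ ‖u‖ := by
    intro u i
    rw [EuclideanSpace.norm_eq]
    have h1 : |u i| = Real.sqrt (u i ^ 2) := (Real.sqrt_sq_eq_abs _).symm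
    rw [h1]
    apply Real.sqrt_le_sqrt
    simpa [Real.norm_eq_abs, sq_abs] using (Finset.single_le_sum (f := fun j => u j ^ 2)
      (fun j _ => sq_nonneg _) (Finset.mem_univ i))
  apply ContinuousLinearMap.opNorm_le_bound _ zero_le_one
  intro v
  rcases k with i | j
  · simpa [coordCLM] using le_trans (habs v.1 i) (le_trans (norm_fst_le v) (by simp))
  · simpa [coordCLM] using le_trans (habs v.2 j) (le_trans (norm_snd_le v) (by simp))

end Coord

section Bridge

variable {d : ℕ}

lemma pderivs_eq_dl_right (L : List (Fin d)) :
    ∀ (h : Eu d × Eu d → ℝ), ContDiff ℝ ∞ h → ∀ x y : Eu d,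
      pderivs L (fun y' => h (x, y')) y = Dl (L.map fun j => bdir d (.inr j)) h (x, y) := by
  induction L with
  | nil => intro h _ x y; rfl
  | cons j L ih =>
      intro h hsm x y
      have hint : (fun y' => fderiv ℝ (fun y'' => h (x, y'')) y' (EuclideanSpace.single j 1))
          = fun y' => (fun p => fderiv ℝ h p (bdir d (.inr j))) (x, y') := by
        funext y'
        have hd : HasFDerivAt (fun y'' => h (x, y''))
            ((fderiv ℝ h (x, y')).comp (ContinuousLinearMap.inr ℝ (Eu d) (Eu d))) y' :=
          ((hsm.differentiable (by simp) (x, y')).hasFDerivAt).comp y'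
            (hasFDerivAt_prodMk_right x y')
        rw [hd.fderiv]
        rfl
      show pderivs L (fun y' => fderiv ℝ (fun y'' => h (x, y'')) y'
          (EuclideanSpace.single j 1)) y = _
      rw [hint]
      exact ih _ (contDiff_fderiv_apply hsm _) x y

lemma pderivs_eq_dl_left (L : List (Fin d)) :
    ∀ (h : Eu d × Eu d → ℝ), ContDiff ℝ ∞ h → ∀ x y : Eu d,
      pderivs L (fun x' => h (x', y)) x = Dl (L.map fun i => bdir d (.inl i)) h (x, y) := by
  induction L with
  | nil => intro h _ x y; rfl
  | cons i L ih =>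
      intro h hsm x y
      have hint : (fun x' => fderiv ℝ (fun x'' => h (x'', y)) x' (EuclideanSpace.single i 1))
          = fun x' => (fun p => fderiv ℝ h p (bdir d (.inl i))) (x', y) := by
        funext x'
        have hd : HasFDerivAt (fun x'' => h (x'', y))
            ((fderiv ℝ h (x', y)).comp (ContinuousLinearMap.inl ℝ (Eu d) (Eu d))) x' :=
          ((hsm.differentiable (by simp) (x', y)).hasFDerivAt).comp x'
            (hasFDerivAt_prodMk_left x' y)
        rw [hd.fderiv]
        rfl
      show pderivs L (fun x' => fderiv ℝ (fun x'' => h (x'', y)) x'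
          (EuclideanSpace.single i 1)) x = _
      rw [hint]
      exact ih _ (contDiff_fderiv_apply hsm _) x y

/-- Canonical joint list of directions associated to a pair of multi-indices. -/
def jlist {d : ℕ} (α β : Fin d → ℕ) : List (Fin d ⊕ Fin d) :=
  ((mToList β).map Sum.inr) ++ ((mToList α).map Sum.inl)

lemma D2_eq_dl (α β : Fin d → ℕ) (h : Eu d × Eu d → ℝ) (hsm : ContDiff ℝ ∞ h) (x y : Eu d) :
    D2 α β (fun x' y' => h (x', y')) x y = Dl ((jlist α β).map (bdir d)) h (x, y) := by
  have inner : (fun x' => pderivM β (fun y' => h (x', y')) y)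
      = fun x' => (Dl ((mToList β).map fun j => bdir d (.inr j)) h) (x', y) := by
    funext x'
    exact pderivs_eq_dl_right (mToList β) h hsm x' y
  show pderivM α (fun x' => pderivM β (fun y' => h (x', y')) y) x = _
  rw [inner]
  rw [pderivM, pderivs_eq_dl_left (mToList α) _ (dl_contDiff _ hsm) x y]
  rw [jlist, List.map_append, dl_append]
  simp [List.map_map, Function.comp_def]

end Bridge

section Counting

variable {d : ℕ}

lemma count_mToList (m : Fin d → ℕ) (i : Fin d) : (mToList m).count i = m i := by
  rw [mToList]
  rw [List.count_flatMap]
  rw [show (List.count i ∘ fun j => List.replicate (m j) j)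
      = fun j => if j = i then m j else 0 by
    funext j
    simp only [Function.comp_apply, List.count_replicate, beq_iff_eq]]
  rw [← Fin.sum_univ_def]
  simp

lemma count_eq_zero_map_inl (L : List (Fin d)) (j : Fin d) :
    (L.map Sum.inl).count (Sum.inr j : Fin d ⊕ Fin d) = 0 := by
  refine List.count_eq_zero.mpr ?_
  simp

lemma count_eq_zero_map_inr (L : List (Fin d)) (i : Fin d) :
    (L.map Sum.inr).count (Sum.inl i : Fin d ⊕ Fin d) = 0 := by
  refine List.count_eq_zero.mpr ?_
  simp

lemma perm_jlist (M : List (Fin d ⊕ Fin d)) :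
    M.Perm (jlist (fun i => M.count (.inl i)) (fun j => M.count (.inr j))) := by
  rw [List.perm_iff_count]
  intro a
  rw [jlist, List.count_append]
  rcases a with i | j
  · rw [count_eq_zero_map_inr, List.count_map_of_injective _ Sum.inl Sum.inl_injective,
      count_mToList]
    simp
  · rw [count_eq_zero_map_inl, List.count_map_of_injective _ Sum.inr Sum.inr_injective,
      count_mToList]
    simp

end Counting

section Meas

variable {d : ℕ}

lemma dl_meas {G : (Eu d × Eu d) → Eu d → ℝ}
    (hsm : ∀ ζ, ContDiff ℝ ∞ (G · ζ))
    (hm : ∀ p, Measurable fun ζ => G p ζ) :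
    ∀ (L : List (Eu d × Eu d)) (p : Eu d × Eu d),
      Measurable fun ζ => Dl L (G · ζ) p := by
  intro L
  induction L using List.reverseRecOn with
  | nil => exact hm
  | append_singleton L v ih =>
      intro p
      have hrw : ∀ ζ, Dl (L ++ [v]) (G · ζ) p = fderiv ℝ (Dl L (G · ζ)) p v := by
        intro ζ; rw [dl_append]; rfl
      simp only [hrw]
      apply measurable_of_tendsto_metrizable
        (f := fun (n : ℕ) ζ => (n : ℝ) • (Dl L (G · ζ) (p + (n : ℝ)⁻¹ • v) - Dl L (G · ζ) p))
      · intro n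
        exact (((ih (p + (n:ℝ)⁻¹ • v)).sub (ih p)).const_smul ((n:ℝ)))
      · rw [tendsto_pi_nhds]
        intro ζ
        have hdiff : HasFDerivAt (Dl L (G · ζ)) (fderiv ℝ (Dl L (G · ζ)) p) p :=
          ((dl_contDiff L (hsm ζ)).differentiable (by simp) p).hasFDerivAt
        exact hdiff.lim v (by simpa using tendsto_natCast_atTop_atTop (R := ℝ))

end Meas

section Machine

variable {d : ℕ} {G : (Eu d × Eu d) → Eu d → ℝ}

/-- The hypotheses bundle for differentiation under the integral sign. -/
structure Hyp (G : (Eu d × Eu d) → Eu d → ℝ) : Prop where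
  hsm : ∀ ζ, ContDiff ℝ ∞ (G · ζ)
  hm : ∀ p, Measurable fun ζ => G p ζ
  hbd : ∀ L : List (Fin d ⊕ Fin d), ∃ g : Eu d → ℝ, Integrable g ∧
    ∀ p ζ, |Dl (L.map (bdir d)) (G · ζ) p| ≤ g ζ

lemma hyp_deriv (h : Hyp G) (k : Fin d ⊕ Fin d) :
    Hyp (fun p ζ => fderiv ℝ (G · ζ) p (bdir d k)) := by
  constructor
  · intro ζ; exact contDiff_fderiv_apply (h.hsm ζ) _
  · intro p; exact dl_meas h.hsm h.hm [bdir d k] p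
  · intro L
    obtain ⟨g, hg, hb⟩ := h.hbd (k :: L)
    exact ⟨g, hg, fun p ζ => hb p ζ⟩

lemma hyp_meas_fderiv (h : Hyp G) (p : Eu d × Eu d) :
    AEStronglyMeasurable (fun ζ => fderiv ℝ (G · ζ) p) (volume : Measure (Eu d)) := by
  have hrw : (fun ζ => fderiv ℝ (G · ζ) p)
      = fun ζ => ∑ k : Fin d ⊕ Fin d, (fderiv ℝ (G · ζ) p (bdir d k)) • coordCLM d k :=
    funext fun ζ => clm_expand _
  rw [hrw]
  apply Finset.aestronglyMeasurable_fun_sum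
  intro k _
  have hc : Continuous fun r : ℝ => r • coordCLM d k := continuous_id.smul continuous_const
  exact hc.comp_aestronglyMeasurable (dl_meas h.hsm h.hm [bdir d k] p).aestronglyMeasurable

lemma hyp_bound_fderiv (h : Hyp G) :
    ∃ g : Eu d → ℝ, Integrable g ∧ ∀ p ζ, ‖fderiv ℝ (G · ζ) p‖ ≤ g ζ := by
  have H : ∀ k : Fin d ⊕ Fin d, ∃ g : Eu d → ℝ, Integrable g ∧
      ∀ p ζ, |fderiv ℝ (G · ζ) p (bdir d k)| ≤ g ζ := by
    intro k
    obtain ⟨g, hg, hb⟩ := h.hbd [k]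
    exact ⟨g, hg, fun p ζ => hb p ζ⟩
  choose g hgint hgbd using H
  refine ⟨fun ζ => ∑ k, g k ζ, integrable_finset_sum _ fun k _ => hgint k, ?_⟩
  intro p ζ
  rw [clm_expand (fderiv ℝ (G · ζ) p)]
  refine le_trans (norm_sum_le _ _) (Finset.sum_le_sum fun k _ => ?_)
  rw [norm_smul]
  have hA : ‖fderiv ℝ (G · ζ) p (bdir d k)‖ ≤ g k ζ := by
    rw [Real.norm_eq_abs]; exact hgbd k p ζ
  have hgpos : (0 : ℝ) ≤ g k ζ := le_trans (abs_nonneg _) (hgbd k p ζ)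
  calc ‖fderiv ℝ (G · ζ) p (bdir d k)‖ * ‖coordCLM d k‖
      ≤ g k ζ * 1 := mul_le_mul hA (norm_coordCLM_le k) (norm_nonneg _) hgpos
    _ = g k ζ := mul_one _

lemma hyp_int (h : Hyp G) (p : Eu d × Eu d) :
    Integrable (fun ζ => G p ζ) (volume : Measure (Eu d)) := by
  obtain ⟨g, hg, hb⟩ := h.hbd []
  exact hg.mono' (h.hm p).aestronglyMeasurable
    (Filter.Eventually.of_forall fun ζ => (Real.norm_eq_abs _).le.trans ((hb p ζ).trans le_rfl))

lemma hyp_int_fderiv (h : Hyp G) (p : Eu d × Eu d) :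
    Integrable (fun ζ => fderiv ℝ (G · ζ) p) (volume : Measure (Eu d)) := by
  obtain ⟨g, hg, hb⟩ := hyp_bound_fderiv h
  exact hg.mono' (hyp_meas_fderiv h p)
    (Filter.Eventually.of_forall fun ζ => hb p ζ)

lemma int1 (h : Hyp G) (p : Eu d × Eu d) :
    HasFDerivAt (fun q => ∫ ζ, G q ζ) (∫ ζ, fderiv ℝ (G · ζ) p) p := by
  obtain ⟨g, hg, hb⟩ := hyp_bound_fderiv h
  apply hasFDerivAt_integral_of_dominated_of_fderiv_le (F := fun q ζ => G q ζ)
    (F' := fun q ζ => fderiv ℝ (G · ζ) q) (bound := g) Filter.univ_mem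
  · exact Filter.Eventually.of_forall fun q => (h.hm q).aestronglyMeasurable
  · exact hyp_int h p
  · exact hyp_meas_fderiv h p
  · exact Filter.Eventually.of_forall fun ζ q _ => hb q ζ
  · exact hg
  · exact Filter.Eventually.of_forall fun ζ q _ =>
      (((h.hsm ζ).differentiable (by simp)) q).hasFDerivAt

lemma int1_apply (h : Hyp G) (p : Eu d × Eu d) (v : Eu d × Eu d) :
    fderiv ℝ (fun q => ∫ ζ, G q ζ) p v = ∫ ζ, fderiv ℝ (G · ζ) p v := by
  rw [(int1 h p).fderiv]
  exact ContinuousLinearMap.integral_apply (hyp_int_fderiv h p) v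

lemma key (n : ℕ) :
    ∀ G : (Eu d × Eu d) → Eu d → ℝ, Hyp G →
      ContDiff ℝ (n : WithTop ℕ∞) (fun p => ∫ ζ, G p ζ) := by
  induction n with
  | zero =>
      intro G h
      refine contDiff_zero.mpr ?_
      have hdiff : Differentiable ℝ (fun p => ∫ ζ, G p ζ) :=
        fun p => (int1 h p).differentiableAt
      exact hdiff.continuous
  | succ n ih =>
      intro G h
      have hcast : ((n + 1 : ℕ) : WithTop ℕ∞) = (n : WithTop ℕ∞) + 1 := by push_cast; rfl
      rw [hcast]
      refine contDiff_succ_iff_fderiv.mpr ⟨fun p => (int1 h p).differentiableAt, ?_, ?_⟩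
      · intro hω; exact absurd hω (by simp)
      · have hrw : fderiv ℝ (fun p => ∫ ζ, G p ζ)
            = fun p => ∑ k : Fin d ⊕ Fin d,
                (∫ ζ, fderiv ℝ (G · ζ) p (bdir d k)) • coordCLM d k := by
          funext p
          rw [(int1 h p).fderiv, clm_expand (∫ ζ, fderiv ℝ (G · ζ) p)]
          refine Finset.sum_congr rfl fun k _ => ?_
          rw [ContinuousLinearMap.integral_apply (hyp_int_fderiv h p)]
        rw [hrw]
        apply ContDiff.sum
        intro k _
        exact (ih _ (hyp_deriv h k)).smul contDiff_const

lemma key2 (L : List (Fin d ⊕ Fin d)) :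
    ∀ G : (Eu d × Eu d) → Eu d → ℝ, Hyp G →
      Dl (L.map (bdir d)) (fun p => ∫ ζ, G p ζ)
        = fun p => ∫ ζ, Dl (L.map (bdir d)) (G · ζ) p := by
  induction L with
  | nil => intro G _; rfl
  | cons k L ih =>
      intro G h
      show Dl (L.map (bdir d)) (fun p => fderiv ℝ (fun q => ∫ ζ, G q ζ) p (bdir d k)) = _
      have h1 : (fun p => fderiv ℝ (fun q => ∫ ζ, G q ζ) p (bdir d k))
          = fun p => ∫ ζ, fderiv ℝ (G · ζ) p (bdir d k) :=
        funext fun p => int1_apply h p (bdir d k)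
      rw [h1, ih _ (hyp_deriv h k)]
      rfl

end Machine

lemma integrable_gauss (d : ℕ) (c : ℝ) (hc : 0 < c) :
    Integrable (fun ζ : Eu d => Real.exp (-c * ‖ζ‖ ^ 2)) (volume : Measure (Eu d)) := by
  have h := GaussianFourier.integrable_cexp_neg_mul_sq_norm_add
    (V := Eu d) (b := (c : ℂ)) (by simpa using hc) 0 0
  have h2 := h.norm
  refine h2.congr ?_
  refine Filter.Eventually.of_forall fun v => ?_
  show ‖Complex.exp _‖ = _
  rw [Complex.norm_exp]
  have : (-(c:ℂ) * (‖v‖:ℂ) ^ 2 + 0 * ((inner ℝ (0 : Eu d) v : ℝ) : ℂ)).re = -c * ‖v‖ ^ 2 := by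
    simp [Complex.add_re, Complex.mul_re, ← Complex.ofReal_pow]
  rw [this]

/-- Lemma 15 of the paper: integrating out a uniformly Gaussian-dominated family of kernels
in the auxiliary variable `ζ` produces a bounded subset of `𝓗_l(ℝ^d)`. -/
theorem statement2 (d : ℕ) (hd : 1 ≤ d) (l : ℤ) (I : Type*)
    (χ : I → ℝ → ℝ → Eu d → Eu d → Eu d → ℝ)
    -- each `χ i` is measurable in all variables
    (hmeas : ∀ i, Measurable fun p : (ℝ × ℝ) × Eu d × Eu d × Eu d =>
      χ i p.1.1 p.1.2 p.2.1 p.2.2.1 p.2.2.2)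
    -- (a) smoothness in `(x,y)`
    (hsm : ∀ i, ∀ s t : ℝ, 0 < s → s < t → t ≤ 1 → ∀ ζ : Eu d,
      ContDiff ℝ (⊤ : ℕ∞) fun p : Eu d × Eu d => χ i s t p.1 p.2 ζ)
    -- (b) uniform Gaussian bounds
    (hb : ∀ α β : Fin d → ℕ, ∃ c₁ ≥ (0:ℝ), ∃ c₂ > (0:ℝ), ∀ i,
      ∀ s t : ℝ, 0 < s → s < t → t ≤ 1 → ∀ x y ζ : Eu d,
        |D2 α β (fun x' y' => χ i s t x' y' ζ) x y| ≤
          c₁ * t ^ (-(((mlen α + mlen β + d : ℕ) : ℝ) + (l : ℝ)) / 2) *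
            Real.exp (-c₂ * ‖x - y‖ ^ 2 / t - c₂ * ‖ζ‖ ^ 2)) :
    -- conclusion: `{𝓘(χ_i) | i ∈ I}` is a bounded subset of `𝓗_l(ℝ^d)`
    (∀ i, ∀ s t : ℝ, 0 < s → s < t → t ≤ 1 →
      ContDiff ℝ (⊤ : ℕ∞) fun p : Eu d × Eu d => ∫ ζ : Eu d, χ i s t p.1 p.2 ζ) ∧
    (∀ α β : Fin d → ℕ, ∃ C₁ ≥ (0:ℝ), ∃ C₂ > (0:ℝ), ∀ i,
      ∀ s t : ℝ, 0 < s → s < t → t ≤ 1 → ∀ x y : Eu d,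
        |D2 α β (fun x' y' => ∫ ζ : Eu d, χ i s t x' y' ζ) x y| ≤
          C₁ * t ^ (-(((mlen α + mlen β + d : ℕ) : ℝ) + (l : ℝ)) / 2) *
            Real.exp (-C₂ * ‖x - y‖ ^ 2 / t)) := by
  -- the hypotheses bundle for each admissible `(i, s, t)`
  have hyp : ∀ (i : I) (s t : ℝ), 0 < s → s < t → t ≤ 1 →
      Hyp (fun (p : Eu d × Eu d) (ζ : Eu d) => χ i s t p.1 p.2 ζ) := by
    intro i s t hs hst ht1
    have ht0 : (0:ℝ) < t := lt_trans hs hst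
    constructor
    · intro ζ; exact hsm i s t hs hst ht1 ζ
    · intro p
      have hcomp : Measurable fun ζ : Eu d => (((s, t) : ℝ × ℝ), (p.1, (p.2, ζ))) :=
        measurable_const.prodMk (measurable_const.prodMk
          (measurable_const.prodMk measurable_id))
      exact (hmeas i).comp hcomp
    · intro L
      set α' : Fin d → ℕ := fun i => L.count (.inl i) with hα'
      set β' : Fin d → ℕ := fun j => L.count (.inr j) with hβ'
      obtain ⟨c₁, hc₁, c₂, hc₂, hball⟩ := hb α' β'
      refine ⟨fun ζ => c₁ * t ^ (-(((mlen α' + mlen β' + d : ℕ) : ℝ) + (l : ℝ)) / 2)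
        * Real.exp (-c₂ * ‖ζ‖ ^ 2), ((integrable_gauss d c₂ hc₂).const_mul _), ?_⟩
      intro p ζ
      have hsmζ : ContDiff ℝ ∞ (fun p : Eu d × Eu d => χ i s t p.1 p.2 ζ) :=
        hsm i s t hs hst ht1 ζ
      have e1 : Dl (L.map (bdir d)) (fun p : Eu d × Eu d => χ i s t p.1 p.2 ζ) p
          = Dl ((jlist α' β').map (bdir d)) (fun p : Eu d × Eu d => χ i s t p.1 p.2 ζ) p := by
        rw [dl_perm ((perm_jlist L).map (bdir d)) _ hsmζ]
      have e2 : Dl ((jlist α' β').map (bdir d)) (fun p : Eu d × Eu d => χ i s t p.1 p.2 ζ) p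
          = D2 α' β' (fun x' y' => χ i s t x' y' ζ) p.1 p.2 :=
        (D2_eq_dl α' β' _ hsmζ p.1 p.2).symm
      rw [show (fun p : Eu d × Eu d => χ i s t p.1 p.2 ζ)
        = ((fun (p : Eu d × Eu d) (ζ : Eu d) => χ i s t p.1 p.2 ζ) · ζ) from rfl] at e1 e2
      rw [e1, e2]
      refine le_trans (hball i s t hs hst ht1 p.1 p.2 ζ) ?_
      have hxy : Real.exp (-c₂ * ‖p.1 - p.2‖ ^ 2 / t - c₂ * ‖ζ‖ ^ 2)
          ≤ Real.exp (-c₂ * ‖ζ‖ ^ 2) := by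
        apply Real.exp_le_exp.mpr
        have : -c₂ * ‖p.1 - p.2‖ ^ 2 / t ≤ 0 := by
          apply div_nonpos_of_nonpos_of_nonneg _ ht0.le
          have := mul_nonneg hc₂.le (sq_nonneg ‖p.1 - p.2‖)
          linarith
        linarith
      have hpos : (0:ℝ) ≤ c₁ * t ^ (-(((mlen α' + mlen β' + d : ℕ) : ℝ) + (l : ℝ)) / 2) :=
        mul_nonneg hc₁ (Real.rpow_nonneg ht0.le _)
      calc c₁ * t ^ (-(((mlen α' + mlen β' + d : ℕ) : ℝ) + (l : ℝ)) / 2)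
            * Real.exp (-c₂ * ‖p.1 - p.2‖ ^ 2 / t - c₂ * ‖ζ‖ ^ 2)
          ≤ c₁ * t ^ (-(((mlen α' + mlen β' + d : ℕ) : ℝ) + (l : ℝ)) / 2)
            * Real.exp (-c₂ * ‖ζ‖ ^ 2) := mul_le_mul_of_nonneg_left hxy hpos
        _ = _ := rfl
  constructor
  · intro i s t hs hst ht1
    exact contDiff_infty.mpr fun n => key n _ (hyp i s t hs hst ht1)
  · intro α β
    obtain ⟨c₁, hc₁, c₂, hc₂, hball⟩ := hb α β
    have hIgauss : (0:ℝ) ≤ ∫ ζ : Eu d, Real.exp (-c₂ * ‖ζ‖ ^ 2) :=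
      integral_nonneg fun ζ => (Real.exp_pos _).le
    refine ⟨c₁ * ∫ ζ : Eu d, Real.exp (-c₂ * ‖ζ‖ ^ 2), mul_nonneg hc₁ hIgauss, c₂, hc₂, ?_⟩
    intro i s t hs hst ht1 x y
    have ht0 : (0:ℝ) < t := lt_trans hs hst
    have hG := hyp i s t hs hst ht1
    have hsmI : ContDiff ℝ ∞ (fun p : Eu d × Eu d => ∫ ζ : Eu d, χ i s t p.1 p.2 ζ) :=
      contDiff_infty.mpr fun n => key n _ hG
    have e1 : D2 α β (fun x' y' => ∫ ζ : Eu d, χ i s t x' y' ζ) x y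
        = Dl ((jlist α β).map (bdir d)) (fun p : Eu d × Eu d => ∫ ζ : Eu d, χ i s t p.1 p.2 ζ)
          (x, y) :=
      D2_eq_dl α β _ hsmI x y
    rw [e1, key2 (jlist α β) _ hG]
    have e2 : ∀ ζ : Eu d,
        Dl ((jlist α β).map (bdir d))
          ((fun (p : Eu d × Eu d) (ζ : Eu d) => χ i s t p.1 p.2 ζ) · ζ) (x, y)
        = D2 α β (fun x' y' => χ i s t x' y' ζ) x y := fun ζ =>
      (D2_eq_dl α β _ (hG.hsm ζ) x y).symm
    set γ : ℝ := -(((mlen α + mlen β + d : ℕ) : ℝ) + (l : ℝ)) / 2 with hγ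
    set K : ℝ := c₁ * t ^ γ * Real.exp (-c₂ * ‖x - y‖ ^ 2 / t) with hK
    have hKpos : 0 ≤ K := by
      apply mul_nonneg (mul_nonneg hc₁ (Real.rpow_nonneg ht0.le _)) (Real.exp_pos _).le
    have hbint : Integrable (fun ζ : Eu d => K * Real.exp (-c₂ * ‖ζ‖ ^ 2)) :=
      (integrable_gauss d c₂ hc₂).const_mul _
    have habs : ∀ ζ : Eu d,
        ‖Dl ((jlist α β).map (bdir d))
          ((fun (p : Eu d × Eu d) (ζ : Eu d) => χ i s t p.1 p.2 ζ) · ζ) (x, y)‖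
        ≤ K * Real.exp (-c₂ * ‖ζ‖ ^ 2) := by
      intro ζ
      rw [Real.norm_eq_abs, e2 ζ]
      refine le_trans (hball i s t hs hst ht1 x y ζ) ?_
      rw [show -c₂ * ‖x - y‖ ^ 2 / t - c₂ * ‖ζ‖ ^ 2
        = (-c₂ * ‖x - y‖ ^ 2 / t) + (-c₂ * ‖ζ‖ ^ 2) by ring, Real.exp_add, hK]
      exact le_of_eq (by ring)
    calc |∫ ζ : Eu d, Dl ((jlist α β).map (bdir d))
            ((fun (p : Eu d × Eu d) (ζ : Eu d) => χ i s t p.1 p.2 ζ) · ζ) (x, y)|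
        = ‖∫ ζ : Eu d, Dl ((jlist α β).map (bdir d))
            ((fun (p : Eu d × Eu d) (ζ : Eu d) => χ i s t p.1 p.2 ζ) · ζ) (x, y)‖ :=
          (Real.norm_eq_abs _).symm
      _ ≤ ∫ ζ : Eu d, K * Real.exp (-c₂ * ‖ζ‖ ^ 2) :=
          norm_integral_le_of_norm_le hbint (Filter.Eventually.of_forall habs)
      _ = K * ∫ ζ : Eu d, Real.exp (-c₂ * ‖ζ‖ ^ 2) := integral_const_mul _ _
      _ = (c₁ * ∫ ζ : Eu d, Real.exp (-c₂ * ‖ζ‖ ^ 2)) * t ^ γ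
            * Real.exp (-c₂ * ‖x - y‖ ^ 2 / t) := by rw [hK]; ring
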